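/- Let D = {t ∈ ℂ : |t| < R} with 0 < R ≤ ∞, and let B = {z ∈ ℂᵏ : |z_i| < ρ_i for all i} be an open polydisk centered at the origin (0 < ρ_i ≤ ∞). Let m₁, …, m_k be nonpositive integers, let m ∈ ℤ, and let f be holomorphic on (D∖{0}) × B such that f(a·t, a^{m₁}z₁, …, a^{m_k}z_k) = a^m · f(t, z) for every a ∈ ℂ with |a| = 1 and every (t, z) ∈ (D∖{0}) × B. Then the function (t, z) ↦ t^{−m} f(t, z) on (D∖{0}) × B extends to a holomorphic function on D × B. -/

import Mathlib

open scoped ENNReal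

lemma aux_zpow_analytic {x : ℂ} (hx : x ≠ 0) (ν : ℤ) : AnalyticAt ℂ (fun y : ℂ => y ^ ν) x := by
  rcases le_or_gt 0 ν with h | h
  · lift ν to ℕ using h
    simpa [zpow_natCast] using (analyticAt_id (𝕜 := ℂ)).fun_pow ν
  · have hν : ν = -(ν.natAbs : ℤ) := by omega
    have : (fun y : ℂ => y ^ ν) = fun y : ℂ => (y ^ (ν.natAbs : ℕ))⁻¹ := by
      funext y
      nth_rewrite 1 [hν]
      rw [zpow_neg, zpow_natCast]
    rw [this]
    exact ((analyticAt_id (𝕜 := ℂ)).pow _).inv (pow_ne_zero _ hx)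

lemma aux_annulus_preconnected {s S : ℝ} (hs : 0 < s) (hsS : s < S) :
    IsPreconnected {a : ℂ | s < ‖a‖ ∧ ‖a‖ < S} := by
  have hstrip : Convex ℝ {w : ℂ | Real.log s < w.re ∧ w.re < Real.log S} := by
    have : {w : ℂ | Real.log s < w.re ∧ w.re < Real.log S}
        = Complex.reLm ⁻¹' (Set.Ioo (Real.log s) (Real.log S)) := by
      ext w; simp [Set.mem_Ioo]
    rw [this]
    exact (convex_Ioo _ _).linear_preimage _
  have himg : {a : ℂ | s < ‖a‖ ∧ ‖a‖ < S}
      = Complex.exp '' {w : ℂ | Real.log s < w.re ∧ w.re < Real.log S} := by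
    ext a
    constructor
    · rintro ⟨h1, h2⟩
      have ha : a ≠ 0 := by
        intro h; rw [h] at h1; simp at h1; linarith
      refine ⟨Complex.log a, ⟨?_, ?_⟩, Complex.exp_log ha⟩
      · rw [Complex.log_re]
        exact Real.log_lt_log hs (by simpa using h1)
      · rw [Complex.log_re]
        exact Real.log_lt_log (by simpa using hs.trans h1) (by simpa using h2)
    · rintro ⟨w, ⟨h1, h2⟩, rfl⟩
      have : ‖Complex.exp w‖ = Real.exp w.re := by
        simpa using Complex.norm_exp w
      constructor
      · rw [this]
        calc s = Real.exp (Real.log s) := (Real.exp_log hs).symm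
        _ < Real.exp w.re := Real.exp_lt_exp.2 h1
      · rw [this]
        calc Real.exp w.re < Real.exp (Real.log S) := Real.exp_lt_exp.2 h2
        _ = S := Real.exp_log (hs.trans hsS)
  rw [himg]
  exact (hstrip.isPreconnected).image _ Complex.continuous_exp.continuousOn

lemma aux_freq : ∃ᶠ a in nhdsWithin (1:ℂ) {(1:ℂ)}ᶜ, ‖a‖ = 1 := by
  have hu : Filter.Tendsto (fun θ : ℝ => Complex.exp (θ * Complex.I))
      (nhdsWithin (0:ℝ) {(0:ℝ)}ᶜ) (nhdsWithin (1:ℂ) {(1:ℂ)}ᶜ) := by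
    rw [tendsto_nhdsWithin_iff]
    constructor
    · have hc : Continuous (fun θ : ℝ => Complex.exp (θ * Complex.I)) := by
        fun_prop
      have := hc.tendsto 0
      simp only [Complex.ofReal_zero, zero_mul, Complex.exp_zero] at this
      exact this.mono_left nhdsWithin_le_nhds
    · have h1 : ∀ᶠ θ : ℝ in nhdsWithin (0:ℝ) {(0:ℝ)}ᶜ, |θ| < 1 ∧ θ ≠ 0 := by
        filter_upwards [eventually_nhdsWithin_of_eventually_nhds
          (eventually_abs_sub_lt 0 one_pos), self_mem_nhdsWithin] with θ h1 h2
        exact ⟨by simpa using h1, by simpa using h2⟩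
      filter_upwards [h1] with θ ⟨hθ1, hθ0⟩
      simp only [Set.mem_compl_iff, Set.mem_singleton_iff]
      intro hcon
      rw [Complex.exp_eq_one_iff] at hcon
      obtain ⟨n, hn⟩ := hcon
      have hθ : (θ : ℂ) = ((n * (2 * Real.pi) : ℝ) : ℂ) := by
        apply mul_right_cancel₀ Complex.I_ne_zero
        rw [hn]; push_cast; ring
      have hθ' : θ = n * (2 * Real.pi) := by exact_mod_cast hθ
      rcases eq_or_ne n 0 with h | h
      · exact hθ0 (by simp [hθ', h])
      · have : (1 : ℝ) ≤ |(n : ℝ)| := by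
          exact_mod_cast Int.one_le_abs h
        have hπ : (3 : ℝ) < Real.pi := Real.pi_gt_three
        have : (2 : ℝ) * Real.pi ≤ |θ| := by
          rw [hθ', abs_mul]
          calc (2:ℝ) * Real.pi = 1 * |2 * Real.pi| := by
                rw [one_mul, abs_of_pos (by positivity)]
          _ ≤ |(n:ℝ)| * |2 * Real.pi| := by
                apply mul_le_mul_of_nonneg_right ‹_› (abs_nonneg _)
        linarith
  exact hu.frequently (Filter.Eventually.frequently
    (Filter.Eventually.of_forall fun θ => by simpa using Complex.abs_exp_ofReal_mul_I θ))

/-- local model at a circle fixed point with nonpositive isotropy weights: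
an S¹-equivariant holomorphic function of weight m on (D∖{0}) × B, where the circle acts
with nonpositive weights m₁,…,m_k on the polydisk B, becomes holomorphic on D × B after
twisting by t^{−m}. -/
theorem stmt_11 (k : ℕ) (R : ℝ≥0∞) (hR : 0 < R)
    (D : Set ℂ) (hD : D = {t : ℂ | (‖t‖₊ : ℝ≥0∞) < R})
    (ρ : Fin k → ℝ≥0∞) (hρ : ∀ i, 0 < ρ i)
    (B : Set (Fin k → ℂ)) (hB : B = {z | ∀ i, (‖z i‖₊ : ℝ≥0∞) < ρ i})
    (m : Fin k → ℤ) (hm : ∀ i, m i ≤ 0) (μ : ℤ)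
    (f : ℂ × (Fin k → ℂ) → ℂ)
    (hf : AnalyticOnNhd ℂ f ((D \ {0}) ×ˢ B))
    (heq : ∀ a : ℂ, ‖a‖ = 1 → ∀ p ∈ (D \ {0}) ×ˢ B,
      f (a * p.1, fun i => a ^ m i * p.2 i) = a ^ μ * f p) :
    ∃ F : ℂ × (Fin k → ℂ) → ℂ, AnalyticOnNhd ℂ F (D ×ˢ B) ∧
      ∀ p ∈ (D \ {0}) ×ˢ B, F p = p.1 ^ (-μ) * f p := by
  classical
  subst hD hB
  -- choose radii r < r' inside D
  obtain ⟨c', hc'0, hc'R⟩ := exists_between hR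
  obtain ⟨c, hc0, hcc'⟩ := exists_between hc'0
  have hc'top : c' ≠ ⊤ := (hc'R.trans_le le_top).ne
  have hctop : c ≠ ⊤ := (hcc'.trans_le (hc'R.trans_le le_top).le).ne
  set r : ℝ := c.toReal with hr_def
  set r' : ℝ := c'.toReal with hr'_def
  have hr0 : 0 < r := ENNReal.toReal_pos hc0.ne' hctop
  have hr'0 : 0 < r' := ENNReal.toReal_pos hc'0.ne' hc'top
  have hrr' : r < r' := (ENNReal.toReal_lt_toReal hctop hc'top).2 hcc'
  have hrc : (0:ℝ) < r := hr0
  have hrC : ((r:ℝ):ℂ) ≠ 0 := by exact_mod_cast hr0.ne'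
  have hnormr : ‖((r:ℝ):ℂ)‖ = r := by
    rw [Complex.norm_real, Real.norm_eq_abs, abs_of_pos hr0]
  have hmemD : ∀ w : ℂ, ‖w‖ ≤ r' → (‖w‖₊ : ℝ≥0∞) < R := by
    intro w hw
    calc (‖w‖₊ : ℝ≥0∞) = ENNReal.ofReal ‖w‖ := (ofReal_norm w).symm
    _ ≤ ENNReal.ofReal r' := ENNReal.ofReal_le_ofReal hw
    _ = c' := by rw [hr'_def, ENNReal.ofReal_toReal hc'top]
    _ < R := hc'R
  set n : Fin k → ℕ := fun i => (-m i).toNat with hn_def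
  have hmn : ∀ i, m i = -(n i : ℤ) := by
    intro i
    have := hm i
    simp only [hn_def]
    omega
  -- the key identity
  have key : ∀ (t : ℂ) (z : Fin k → ℂ), t ≠ 0 → ‖t‖ < r →
      (∀ i, (‖z i‖₊ : ℝ≥0∞) < ρ i) →
      f (((r:ℝ):ℂ), fun i => (((r:ℝ):ℂ)/t) ^ m i * z i) = (((r:ℝ):ℂ)/t) ^ μ * f (t, z) := by
    intro t z ht hts hz
    have htpos : 0 < ‖t‖ := norm_pos_iff.2 ht
    -- choose intermediate polyradii
    choose d hd1 hd2 using fun i => exists_between (hz i)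
    have hdtop : ∀ i, d i ≠ ⊤ := fun i => ((hd2 i).trans_le le_top).ne
    have hdz : ∀ i, ‖z i‖ < (d i).toReal := by
      intro i
      have h := hd1 i
      have : ENNReal.ofReal ‖z i‖ < d i := by
        rwa [ofReal_norm]
      exact (ENNReal.ofReal_lt_iff_lt_toReal (norm_nonneg _) (hdtop i)).1 this
    -- choose inner annulus radius s < 1
    have hs_ex : ∃ s : ℝ, (0 < s ∧ s < 1) ∧ ∀ i, (s⁻¹) ^ (n i) * ‖z i‖ < (d i).toReal := by
      have hne : (nhdsWithin (1:ℝ) (Set.Ioo (0:ℝ) 1)).NeBot :=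
        right_nhdsWithin_Ioo_neBot one_pos
      have hev : ∀ᶠ s : ℝ in nhdsWithin (1:ℝ) (Set.Ioo 0 1),
          ∀ i, (s⁻¹) ^ (n i) * ‖z i‖ < (d i).toReal := by
        rw [Filter.eventually_all]
        intro i
        apply eventually_nhdsWithin_of_eventually_nhds
        have hcont : ContinuousAt (fun s : ℝ => (s⁻¹) ^ (n i) * ‖z i‖) 1 :=
          (((continuousAt_id).inv₀ one_ne_zero).pow _).mul continuousAt_const
        have hlim : ((1:ℝ)⁻¹) ^ (n i) * ‖z i‖ < (d i).toReal := by
          simpa using hdz i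
        exact hcont.eventually_lt continuousAt_const (by simpa using hlim)
      obtain ⟨s, hs1, hs2⟩ := (hev.and self_mem_nhdsWithin).exists
      exact ⟨s, ⟨hs2.1, hs2.2⟩, hs1⟩
    obtain ⟨s, ⟨hs0, hs1⟩, hsz⟩ := hs_ex
    set S : ℝ := r' / ‖t‖ with hS_def
    have hS1 : 1 < S := (one_lt_div htpos).2 (hts.trans hrr')
    have hmemA : ∀ a : ℂ, s < ‖a‖ → ‖a‖ < S →
        (a * t, fun i => a ^ m i * z i) ∈
          ({t : ℂ | (‖t‖₊ : ℝ≥0∞) < R} \ {0}) ×ˢ {z : Fin k → ℂ | ∀ i, (‖z i‖₊ : ℝ≥0∞) < ρ i} := by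
      intro a ha1 ha2
      have ha0 : a ≠ 0 := by
        intro h; rw [h] at ha1; simp at ha1; linarith
      refine ⟨⟨?_, ?_⟩, ?_⟩
      · refine hmemD _ ?_
        rw [norm_mul]
        calc ‖a‖ * ‖t‖ ≤ S * ‖t‖ := mul_le_mul_of_nonneg_right ha2.le (norm_nonneg _)
        _ = r' := div_mul_cancel₀ _ htpos.ne'
      · simp only [Set.mem_singleton_iff]
        exact mul_ne_zero ha0 ht
      · intro i
        have hb : ‖a ^ m i * z i‖ ≤ (s⁻¹) ^ (n i) * ‖z i‖ := by
          rw [norm_mul]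
          apply mul_le_mul_of_nonneg_right _ (norm_nonneg _)
          have he : a ^ m i = (a⁻¹) ^ (n i) := by
            rw [hmn i, zpow_neg, zpow_natCast, inv_pow]
          rw [he, norm_pow, norm_inv]
          exact pow_le_pow_left₀ (by positivity) (inv_anti₀ hs0 ha1.le) _
        have hlt : ‖a ^ m i * z i‖ < (d i).toReal := hb.trans_lt (hsz i)
        calc (‖a ^ m i * z i‖₊ : ℝ≥0∞) = ENNReal.ofReal ‖a ^ m i * z i‖ :=
              (ofReal_norm _).symm
        _ ≤ d i := ENNReal.ofReal_le_of_le_toReal hlt.le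
        _ < ρ i := hd2 i
    set A : Set ℂ := {a : ℂ | s < ‖a‖ ∧ ‖a‖ < S} with hA_def
    have hApre : IsPreconnected A := aux_annulus_preconnected hs0 (hs1.trans hS1)
    have hφ : AnalyticOnNhd ℂ (fun a : ℂ => f (a * t, fun i => a ^ m i * z i)) A := by
      intro a ha
      have ha1 : s < ‖a‖ := ha.1
      have ha0 : a ≠ 0 := norm_pos_iff.1 (hs0.trans ha1)
      have hinner : AnalyticAt ℂ (fun a : ℂ => ((a * t, fun i => a ^ m i * z i) :
          ℂ × (Fin k → ℂ))) a := by
        apply AnalyticAt.prod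
        · exact (analyticAt_id).mul analyticAt_const
        · rw [analyticAt_pi_iff]
          intro i
          exact (aux_zpow_analytic ha0 (m i)).mul analyticAt_const
      have hcomp := AnalyticAt.comp (f := fun a : ℂ => ((a * t, fun i => a ^ m i * z i) :
          ℂ × (Fin k → ℂ))) (x := a) (hf _ (hmemA a ha.1 ha.2)) hinner
      exact hcomp
    have hψ : AnalyticOnNhd ℂ (fun a : ℂ => a ^ μ * f (t, z)) A := by
      intro a ha
      have ha1 : s < ‖a‖ := ha.1
      have ha0 : a ≠ 0 := norm_pos_iff.1 (hs0.trans ha1)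
      exact (aux_zpow_analytic ha0 μ).mul analyticAt_const
    have htz_mem : ((t, z) : ℂ × (Fin k → ℂ)) ∈
        ({t : ℂ | (‖t‖₊ : ℝ≥0∞) < R} \ {0}) ×ˢ {z : Fin k → ℂ | ∀ i, (‖z i‖₊ : ℝ≥0∞) < ρ i} :=
      ⟨⟨hmemD t (hts.trans hrr').le, by simpa using ht⟩, hz⟩
    have hfr : ∃ᶠ a in nhdsWithin (1:ℂ) {(1:ℂ)}ᶜ,
        f (a * t, fun i => a ^ m i * z i) = a ^ μ * f (t, z) := by
      apply aux_freq.mono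
      intro a ha
      exact heq a ha (t, z) htz_mem
    have h1A : (1:ℂ) ∈ A := by
      constructor <;> simp only [norm_one]
      · exact hs1
      · exact hS1
    have hEq := hφ.eqOn_of_preconnected_of_frequently_eq hψ hApre h1A hfr
    have ha₀A : ((r:ℝ):ℂ)/t ∈ A := by
      have hnr : ‖((r:ℝ):ℂ)/t‖ = r / ‖t‖ := by rw [norm_div, hnormr]
      constructor <;> rw [hnr]
      · have : 1 < r / ‖t‖ := (one_lt_div htpos).2 hts
        linarith
      · rw [hS_def]
        gcongr
    have := hEq ha₀A
    simpa [div_mul_cancel₀ _ ht] using this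
  -- the extension
  set G : ℂ × (Fin k → ℂ) → ℂ :=
    fun p => ((r:ℝ):ℂ) ^ (-μ) * f (((r:ℝ):ℂ), fun i => (p.1/((r:ℝ):ℂ)) ^ (n i) * p.2 i)
    with hG_def
  refine ⟨fun p => if p.1 = 0 then G p else p.1 ^ (-μ) * f p, ?_, ?_⟩
  · rintro ⟨t, z⟩ ⟨hp1, hp2⟩
    by_cases hp0 : t = 0
    · -- near t = 0, agrees with G
      have hGa : AnalyticAt ℂ G (t, z) := by
        apply analyticAt_const.mul
        have hinner : AnalyticAt ℂ (fun q : ℂ × (Fin k → ℂ) =>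
            ((((r:ℝ):ℂ), fun i => (q.1/((r:ℝ):ℂ)) ^ (n i) * q.2 i) : ℂ × (Fin k → ℂ))) (t, z) := by
          apply AnalyticAt.prod analyticAt_const
          rw [analyticAt_pi_iff]
          intro i
          exact ((analyticAt_fst.div analyticAt_const hrC).pow _).mul
            (((ContinuousLinearMap.proj i : (Fin k → ℂ) →L[ℂ] ℂ).analyticAt _).comp analyticAt_snd)
        refine (hf _ ?_).comp hinner
        refine ⟨⟨hmemD _ (by rw [hnormr]; exact hrr'.le), by simpa using hrC⟩, ?_⟩
        intro i
        calc (‖(t/((r:ℝ):ℂ)) ^ (n i) * z i‖₊ : ℝ≥0∞)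
            = ENNReal.ofReal ‖(t/((r:ℝ):ℂ)) ^ (n i) * z i‖ := (ofReal_norm _).symm
        _ ≤ ENNReal.ofReal ‖z i‖ := by
              apply ENNReal.ofReal_le_ofReal
              rw [norm_mul, norm_pow]
              calc ‖t/((r:ℝ):ℂ)‖ ^ (n i) * ‖z i‖ ≤ 1 * ‖z i‖ := by
                    apply mul_le_mul_of_nonneg_right _ (norm_nonneg _)
                    apply pow_le_one₀ (norm_nonneg _)
                    rw [hp0]
                    simp
              _ = ‖z i‖ := one_mul _
        _ = (‖z i‖₊ : ℝ≥0∞) := ofReal_norm _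
        _ < ρ i := hp2 i
      apply hGa.congr
      have hWopen : IsOpen {q : ℂ × (Fin k → ℂ) | ‖q.1‖ < r ∧ ∀ i, (‖q.2 i‖₊ : ℝ≥0∞) < ρ i} := by
        rw [Set.setOf_and]
        apply IsOpen.inter
        · exact isOpen_Iio.preimage (continuous_norm.comp continuous_fst)
        · have he : {q : ℂ × (Fin k → ℂ) | ∀ i, (‖q.2 i‖₊ : ℝ≥0∞) < ρ i}
              = ⋂ i, {q : ℂ × (Fin k → ℂ) | (‖q.2 i‖₊ : ℝ≥0∞) < ρ i} := by
            ext q; simp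
          rw [he]
          apply isOpen_iInter_of_finite
          intro i
          exact isOpen_Iio.preimage (ENNReal.continuous_coe.comp
            (continuous_nnnorm.comp ((continuous_apply i).comp continuous_snd)))
      have hpW : ((t, z) : ℂ × (Fin k → ℂ)) ∈
          {q : ℂ × (Fin k → ℂ) | ‖q.1‖ < r ∧ ∀ i, (‖q.2 i‖₊ : ℝ≥0∞) < ρ i} := by
        refine ⟨?_, hp2⟩
        rw [hp0]; simpa using hr0
      apply Filter.eventuallyEq_of_mem (hWopen.mem_nhds hpW)
      rintro ⟨t', z'⟩ ⟨hq1, hq2⟩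
      change G (t', z') = if t' = 0 then G (t', z') else t' ^ (-μ) * f (t', z')
      by_cases hq0 : t' = 0
      · rw [if_pos hq0]
      · rw [if_neg hq0]
        have hk := key t' z' hq0 hq1 hq2
        have hrw : ∀ i, (t'/((r:ℝ):ℂ)) ^ (n i) * z' i = (((r:ℝ):ℂ)/t') ^ m i * z' i := by
          intro i
          congr 1
          rw [hmn i, zpow_neg, zpow_natCast, ← inv_pow, inv_div]
        simp only [hG_def]
        rw [show (fun i => (t'/((r:ℝ):ℂ)) ^ (n i) * z' i)
            = fun i => (((r:ℝ):ℂ)/t') ^ m i * z' i from funext hrw, hk]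
        rw [← mul_assoc]
        congr 1
        rw [div_zpow, zpow_neg, zpow_neg]
        field_simp
    · have hana : AnalyticAt ℂ (fun q : ℂ × (Fin k → ℂ) => q.1 ^ (-μ) * f q) (t, z) := by
        refine AnalyticAt.mul ?_ (hf _ ⟨⟨hp1, by simpa using hp0⟩, hp2⟩)
        exact (aux_zpow_analytic hp0 (-μ)).comp (f := Prod.fst) (x := (t, z)) analyticAt_fst
      apply hana.congr
      apply Filter.eventuallyEq_of_mem
        ((isOpen_compl_singleton.preimage (continuous_fst)).mem_nhds (by simpa using hp0))
      intro q hq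
      exact (if_neg hq).symm
  · intro p hp
    exact if_neg (show ¬ p.1 = 0 by simpa using hp.1.2)
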